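/- Membership criterion for the maximal tensor product: let I, J be finite index sets, let C ⊆ ℝ^I be a cone, and let D ⊆ ℝ^J be a closed convex cone containing 0. Then z : I×J → ℝ lies in C ⊗_max D if and only if for every g ∈ C*, the function j ↦ ∑_{i∈I} g_i z_{ij} lies in D. -/

import Mathlib

open Finset

noncomputable section

/-- The dual cone of a set of real-valued functions on a finite index set. -/
def dualCone {I : Type*} [Fintype I] (C : Set (I → ℝ)) : Set (I → ℝ) :=
  {g | ∀ x ∈ C, 0 ≤ ∑ i, g i * x i}

/-- The convex cone generated by a set: all finite nonnegative linear combinations. -/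
def coneHull {E : Type*} [AddCommMonoid E] [Module ℝ E] (X : Set E) : Set E :=
  {y | ∃ (m : ℕ) (c : Fin m → ℝ) (v : Fin m → E),
    (∀ i, 0 ≤ c i) ∧ (∀ i, v i ∈ X) ∧ y = ∑ i, c i • v i}

/-- The square cone `Sq ⊆ ℝ^S`, where `S = {-1,0,+1}` is `SignType`. -/
def Sq : Set (SignType → ℝ) :=
  {x | -x 0 ≤ x (-1) ∧ x (-1) ≤ x 0 ∧ -x 0 ≤ x 1 ∧ x 1 ≤ x 0}

/-- `hF v t s = h_v(t,s)`: equals `t` if `v = s`, `1` if `v = 0`, and `0` if `v = -s`. -/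
def hF (v t s : SignType) : ℝ := if v = s then (t : ℝ) else if v = 0 then 1 else 0

/-- The no-signaling cone `NS_n`. -/
def NS (n : ℕ) : Set ((Fin n → SignType) → ℝ) :=
  {x | ∀ s t : Fin n → SignType, (∀ j, s j ≠ 0) → (∀ j, t j ≠ 0) →
    0 ≤ ∑ v : Fin n → SignType, (∏ j, hF (v j) (t j) (s j)) * x v}

/-- Local deterministic strategies: `a j 0 = 1` and `a j (±1) ∈ {-1,+1}`. -/
def IsDet {n : ℕ} (a : Fin n → SignType → ℝ) : Prop :=
  ∀ j, a j 0 = 1 ∧ (a j (-1) = -1 ∨ a j (-1) = 1) ∧ (a j 1 = -1 ∨ a j 1 = 1)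

/-- The Bell cone `B_n`: the convex cone generated by the local deterministic points. -/
def Bell (n : ℕ) : Set ((Fin n → SignType) → ℝ) :=
  coneHull {x | ∃ a : Fin n → SignType → ℝ, IsDet a ∧ x = fun s => ∏ j, a j (s j)}

/-- The tensor `F_{st}` (lowered indices). -/
def Flo (s t : SignType) : ℝ :=
  if s = 0 then (if t = 0 then 1 else 0)
  else if t = 0 then 0
  else if s = 1 ∧ t = 1 then -(1/2) else 1/2

/-- The tensor `F^{st}` (raised indices). -/
def Fup (s t : SignType) : ℝ :=
  if s = 0 then (if t = 0 then 1 else 0)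
  else if t = 0 then 0
  else if s = 1 ∧ t = 1 then -1 else 1

/-- The minimal tensor product of two cones. -/
def minTensor {I J : Type*} (C : Set (I → ℝ)) (D : Set (J → ℝ)) : Set (I × J → ℝ) :=
  coneHull {z | ∃ c ∈ C, ∃ d ∈ D, z = fun p => c p.1 * d p.2}

/-- The maximal tensor product of two cones. -/
def maxTensor {I J : Type*} [Fintype I] [Fintype J]
    (C : Set (I → ℝ)) (D : Set (J → ℝ)) : Set (I × J → ℝ) :=
  {z | ∀ g ∈ dualCone C, ∀ h ∈ dualCone D, 0 ≤ ∑ p : I × J, g p.1 * h p.2 * z p}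

lemma bipolar {J : Type*} [Fintype J] (D : Set (J → ℝ))
    (hDclosed : IsClosed D) (hDadd : ∀ x ∈ D, ∀ y ∈ D, x + y ∈ D)
    (hDsmul : ∀ c : ℝ, 0 ≤ c → ∀ x ∈ D, c • x ∈ D) (hD0 : (0 : J → ℝ) ∈ D)
    (x : J → ℝ) (hx : ∀ h ∈ dualCone D, 0 ≤ ∑ j, h j * x j) : x ∈ D := by
  let e : EuclideanSpace ℝ J ≃L[ℝ] (J → ℝ) := PiLp.continuousLinearEquiv 2 ℝ _
  let K : ConvexCone ℝ (EuclideanSpace ℝ J) :=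
    { carrier := ⇑e ⁻¹' D
      smul_mem' := fun c hc v hv => hDsmul c hc.le _ hv
      add_mem' := fun v hv w hw => hDadd _ hv _ hw }
  have hne : (K : Set (EuclideanSpace ℝ J)).Nonempty := ⟨0, hD0⟩
  have hcl : IsClosed (K : Set (EuclideanSpace ℝ J)) := hDclosed.preimage e.continuous
  let P : ProperCone ℝ (EuclideanSpace ℝ J) :=
    { carrier := ⇑e ⁻¹' D
      add_mem' := fun {v w} hv hw => hDadd _ hv _ hw
      zero_mem' := by simpa using hD0
      smul_mem' := fun c v hv => hDsmul c c.2 _ hv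
      isClosed' := hcl }
  have key := ProperCone.innerDual_innerDual P
  have hxK : (e.symm x : EuclideanSpace ℝ J) ∈
      ProperCone.innerDual (ProperCone.innerDual (P : Set (EuclideanSpace ℝ J)) : Set (EuclideanSpace ℝ J)) := by
    intro h hh
    have hh' : e h ∈ dualCone D := by
      intro y hy
      have t := hh (x := e.symm y) (show e (e.symm y) ∈ D by simpa using hy)
      rw [innerₗ_apply_apply, PiLp.inner_apply] at t
      show 0 ≤ ∑ i, h i * y i
      simpa [e, mul_comm] using t
    have t := hx (e h) hh'
    rw [innerₗ_apply_apply, PiLp.inner_apply]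
    show 0 ≤ ∑ i, x i * h i
    simpa [e, mul_comm] using t
  rw [key] at hxK
  have hxK' : e (e.symm x) ∈ D := hxK
  simpa using hxK'

lemma rearr {I J : Type*} [Fintype I] [Fintype J] (g : I → ℝ) (h : J → ℝ) (z : I × J → ℝ) :
    ∑ p : I × J, g p.1 * h p.2 * z p = ∑ j, h j * ∑ i, g i * z (i, j) := by
  rw [Fintype.sum_prod_type, Finset.sum_comm]
  exact Finset.sum_congr rfl fun j _ => by
    rw [Finset.mul_sum]; exact Finset.sum_congr rfl fun i _ => by ring

/-- Membership criterion for the maximal tensor product: `z ∈ C ⊗_max D` iff for every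
`g ∈ C*` the contraction `j ↦ ∑_i g_i z_{ij}` lies in `D`. -/
theorem statement19 {I J : Type*} [Fintype I] [Fintype J]
    (C : Set (I → ℝ)) (D : Set (J → ℝ))
    (hCclosed : IsClosed C) (hDclosed : IsClosed D)
    (hCadd : ∀ x ∈ C, ∀ y ∈ C, x + y ∈ C) (hDadd : ∀ x ∈ D, ∀ y ∈ D, x + y ∈ D)
    (hCsmul : ∀ c : ℝ, 0 ≤ c → ∀ x ∈ C, c • x ∈ C)
    (hDsmul : ∀ c : ℝ, 0 ≤ c → ∀ x ∈ D, c • x ∈ D)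
    (hC0 : (0 : I → ℝ) ∈ C) (hD0 : (0 : J → ℝ) ∈ D)
    (z : I × J → ℝ) :
    z ∈ maxTensor C D ↔
      ∀ g ∈ dualCone C, (fun j : J => ∑ i : I, g i * z (i, j)) ∈ D := by
  constructor
  · intro hz g hg
    apply bipolar D hDclosed hDadd hDsmul hD0
    intro h hh
    have := hz g hg h hh
    rwa [rearr] at this
  · intro hz g hg h hh
    have := hh _ (hz g hg)
    rwa [rearr]
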